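/- Fix h > 0 and m > 1 with h·m/(m-1) < 2, and fix μ ≥ 0. The function f(ρ) = √ρ·(1 - (h/2)·(1 - (m/(m-1))·ρ^{m-1})) - √μ has a unique solution ρ ≥ 0 with f(ρ) = 0 when μ > 0, and moreover f is strictly increasing in ρ on [0, ∞). -/

import Mathlib

theorem stmt_8 (h m μ : ℝ) (hh : 0 < h) (hm : 1 < m) (hhm : h * m / (m - 1) < 2)
    (hμ : 0 ≤ μ)
    (f : ℝ → ℝ)
    (hf : ∀ ρ, f ρ = Real.sqrt ρ * (1 - h / 2 * (1 - m / (m - 1) * ρ ^ (m - 1)))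
          - Real.sqrt μ) :
    StrictMonoOn f (Set.Ici 0) ∧ (0 < μ → ∃! ρ : ℝ, 0 ≤ ρ ∧ f ρ = 0) := by
  have hm1 : (0:ℝ) < m - 1 := by linarith
  have hc : 1 < m / (m - 1) := (one_lt_div hm1).2 (by linarith)
  have hc0 : 0 < m / (m - 1) := by positivity
  have hB1 : h / 2 * (m / (m - 1)) < 1 := by
    have : h * m / (m - 1) = 2 * (h / 2 * (m / (m - 1))) := by
      field_simp
    linarith [this ▸ hhm]
  have hA : 0 < 1 - h / 2 := by nlinarith
  -- positivity of the bracket factor for ρ ≥ 0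
  have hP : ∀ x : ℝ, 0 ≤ x → 0 < 1 - h / 2 * (1 - m / (m - 1) * x ^ (m - 1)) := by
    intro x hx
    have hxp : 0 ≤ x ^ (m - 1) := Real.rpow_nonneg hx _
    nlinarith [mul_nonneg (mul_nonneg hh.le hc0.le) hxp]
  have key : StrictMonoOn f (Set.Ici 0) := by
    intro x hx y hy hxy
    rw [hf, hf]
    have hx0 : (0:ℝ) ≤ x := hx
    have hy0 : (0:ℝ) ≤ y := hy
    have hsx : Real.sqrt x < Real.sqrt y := Real.sqrt_lt_sqrt hx0 hxy
    have hpx := hP x hx0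
    have hple : x ^ (m - 1) ≤ y ^ (m - 1) :=
      Real.rpow_le_rpow hx0 hxy.le hm1.le
    have hboth : 1 - h / 2 * (1 - m / (m - 1) * x ^ (m - 1))
        ≤ 1 - h / 2 * (1 - m / (m - 1) * y ^ (m - 1)) := by
      nlinarith [mul_nonneg (mul_nonneg hh.le hc0.le) (sub_nonneg.2 hple)]
    have h1 := mul_lt_mul_of_pos_right hsx hpx
    have h2 := mul_le_mul_of_nonneg_left hboth (Real.sqrt_nonneg y)
    linarith
  refine ⟨key, fun hμ0 => ?_⟩
  set R := max 1 μ with hR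
  have hR1 : (1:ℝ) ≤ R := le_max_left _ _
  have hRμ : μ ≤ R := le_max_right _ _
  have hR0 : (0:ℝ) ≤ R := by linarith
  have hf0 : f 0 < 0 := by
    rw [hf]
    simp [Real.sqrt_zero]
    exact hμ0
  have hfR : 0 ≤ f R := by
    rw [hf]
    have h1 : (1:ℝ) ≤ R ^ (m - 1) := Real.one_le_rpow hR1 hm1.le
    have h4 := mul_le_mul hc.le h1 zero_le_one hc0.le
    have h2 : 1 ≤ 1 - h / 2 * (1 - m / (m - 1) * R ^ (m - 1)) := by
      nlinarith [mul_nonneg hh.le (by linarith : 0 ≤ m / (m - 1) * R ^ (m - 1) - 1)]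
    have h3 : Real.sqrt μ ≤ Real.sqrt R := Real.sqrt_le_sqrt hRμ
    nlinarith [Real.sqrt_nonneg μ, Real.sqrt_nonneg R]
  have hcontrpow : Continuous fun x : ℝ => x ^ (m - 1) := by
    rw [continuous_iff_continuousAt]
    intro x
    exact Real.continuousAt_rpow_const x (m - 1) (Or.inr hm1.le)
  have hcont : ContinuousOn f (Set.Icc 0 R) := by
    have : f = fun ρ => Real.sqrt ρ * (1 - h / 2 * (1 - m / (m - 1) * ρ ^ (m - 1)))
        - Real.sqrt μ := funext hf
    rw [this]
    exact ((Real.continuous_sqrt.mul (by continuity)).sub continuous_const).continuousOn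
  have hmem : (0:ℝ) ∈ Set.Icc (f 0) (f R) := ⟨hf0.le, hfR⟩
  obtain ⟨ρ, hρmem, hρ⟩ := intermediate_value_Icc hR0 hcont hmem
  refine ⟨ρ, ⟨hρmem.1, hρ⟩, ?_⟩
  rintro y ⟨hy0, hy⟩
  exact key.injOn (Set.mem_Ici.2 hy0) (Set.mem_Ici.2 hρmem.1) (by rw [hy, hρ])
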